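/- arXiv:2407.04357 — 3 statements merged into one kernel-verified Lean document; each statement's English description precedes it below -/
import Mathlib

section
/- Let X be a Banach space and V : [0,∞) → B(X) with V(0) = I, each V(t) a contraction, and V(t)V(t') = V(t')V(t) for all t, t' ≥ 0. Suppose Ax := lim_{h→0⁺} (V(h)x − x)/h exists for all x in a dense subspace D(A) ⊂ X. Let (a_{n,i})_{i=1}^n, n ∈ ℕ, be a triangular array of positive reals with Σ_{i=1}^n a_{n,i} = 1 for each n and lim_{n→∞} Σ_{i=1}^n |1/n − a_{n,i}| = 0. Then for every x ∈ X, lim_{n→∞} ‖V(t/n)^n x − ∏_{i=1}^n V(a_{n,i} t) x‖ = 0, uniformly for t ∈ [0, t₀] for any fixed t₀ > 0. -/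
open Filter Topology Set

section Aux

variable {X : Type*} [NormedAddCommGroup X] [NormedSpace ℝ X]

lemma aux_prod_contraction (L : List (X →L[ℝ] X)) (hL : ∀ T ∈ L, ‖T‖ ≤ 1) (y : X) :
    ‖L.prod y‖ ≤ ‖y‖ := by
  induction L with
  | nil => simp
  | cons T L ih =>
    simp only [List.prod_cons, ContinuousLinearMap.mul_apply]
    calc ‖T (L.prod y)‖ ≤ ‖T‖ * ‖L.prod y‖ := T.le_opNorm _
      _ ≤ 1 * ‖y‖ := by
          exact mul_le_mul (hL T (by simp)) (ih fun S hS => hL S (by simp [hS]))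
            (norm_nonneg _) zero_le_one
      _ = ‖y‖ := one_mul _

lemma aux_pow_contraction (S : X →L[ℝ] X) (hS : ‖S‖ ≤ 1) (n : ℕ) (y : X) :
    ‖(S ^ n) y‖ ≤ ‖y‖ := by
  rw [← List.prod_replicate]
  exact aux_prod_contraction _ (fun T hT => by rw [List.eq_of_mem_replicate hT]; exact hS) y

lemma aux_telescope (S : X →L[ℝ] X) (hS : ‖S‖ ≤ 1) (L : List (X →L[ℝ] X))
    (hL : ∀ T ∈ L, ‖T‖ ≤ 1 ∧ T * S = S * T) (x : X) :
    ‖(S ^ L.length) x - L.prod x‖ ≤ (L.map fun T => ‖(S - T) x‖).sum := by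
  induction L with
  | nil => simp
  | cons T L ih =>
    have hT := hL T (by simp)
    have hL' : ∀ T ∈ L, ‖T‖ ≤ 1 ∧ T * S = S * T := fun S hS => hL S (by simp [hS])
    have hcomm : (S - T) * S ^ L.length = S ^ L.length * (S - T) := by
      have h1 : Commute (S - T) (S ^ L.length) := by
        refine Commute.pow_right ?_ _
        exact (Commute.refl S).sub_left (hT.2)
      exact h1
    have key : (S ^ (T :: L).length) x - (T :: L).prod x
        = (S ^ L.length) ((S - T) x) + T ((S ^ L.length) x - L.prod x) := by
      have : (S ^ L.length) ((S - T) x) = ((S - T) * S ^ L.length) x := by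
        rw [hcomm]; rfl
      rw [this]
      simp only [List.length_cons, List.prod_cons, ContinuousLinearMap.mul_apply,
        ContinuousLinearMap.sub_apply, pow_succ]
      simp only [ContinuousLinearMap.mul_apply, map_sub]
      have hps : (S ^ L.length) (S x) = S ((S ^ L.length) x) := by
        have h2 : S ^ L.length * S = S * S ^ L.length :=
          (pow_succ S L.length).symm.trans (pow_succ' S L.length)
        calc (S ^ L.length) (S x) = (S ^ L.length * S) x := rfl
          _ = (S * S ^ L.length) x := by rw [h2]
          _ = S ((S ^ L.length) x) := rfl
      rw [hps]
      abel
    rw [key]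
    simp only [List.map_cons, List.sum_cons]
    calc ‖(S ^ L.length) ((S - T) x) + T ((S ^ L.length) x - L.prod x)‖
        ≤ ‖(S ^ L.length) ((S - T) x)‖ + ‖T ((S ^ L.length) x - L.prod x)‖ := norm_add_le _ _
      _ ≤ ‖(S - T) x‖ + (L.map fun T => ‖(S - T) x‖).sum := by
          gcongr
          · exact aux_pow_contraction S hS _ _
          · calc ‖T ((S ^ L.length) x - L.prod x)‖
                ≤ ‖T‖ * ‖(S ^ L.length) x - L.prod x‖ := T.le_opNorm _
              _ ≤ 1 * ((L.map fun T => ‖(S - T) x‖).sum) := by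
                  exact mul_le_mul hT.1 (ih hL') (norm_nonneg _) zero_le_one
              _ = _ := one_mul _

lemma aux_sum_fin (g : ℕ → ℝ) (n : ℕ) :
    ∑ i : Fin n, g (i.1 + 1) = ∑ i ∈ Finset.Icc 1 n, g i := by
  rw [← Finset.Ico_add_one_right_eq_Icc, Finset.sum_Ico_eq_sum_range]
  rw [Fin.sum_univ_eq_sum_range (fun i => g (i + 1)) n]
  exact Finset.sum_congr rfl fun i _ => by rw [add_comm]

end Aux

/-- Lemma 2.  Let `V : [0,∞) → B(X)` with `V 0 = I`, each `V t` a contraction, and all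
`V t` commuting.  Assume `A x = lim_{h→0⁺} (V h x - x)/h` exists for all `x` in a dense
subspace `D`.  If `(a n i)_{i=1}^n` is a triangular array of positive reals with row
sums `1` and `lim_n ∑_{i=1}^n |1/n - a n i| = 0`, then for every `x ∈ X`,
`lim_n ‖(V (t/n))^n x - ∏_{i=1}^n V (a n i * t) x‖ = 0`, uniformly for `t ∈ [0, t₀]`. -/
theorem pow_sub_prod_tendsto_zero
    {X : Type*} [NormedAddCommGroup X] [NormedSpace ℝ X] [CompleteSpace X]
    (V : ℝ → X →L[ℝ] X) (hV0 : V 0 = 1)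
    (hcontr : ∀ t ≥ (0 : ℝ), ‖V t‖ ≤ 1)
    (hcomm : ∀ t ≥ (0 : ℝ), ∀ t' ≥ (0 : ℝ), V t * V t' = V t' * V t)
    (D : Submodule ℝ X) (hD : Dense (D : Set X))
    (A : X → X)
    (hA : ∀ x ∈ D, Tendsto (fun h : ℝ => h⁻¹ • (V h x - x)) (𝓝[>] 0) (𝓝 (A x)))
    (a : ℕ → ℕ → ℝ)
    (hpos : ∀ n ≥ 1, ∀ i ∈ Finset.Icc 1 n, 0 < a n i)
    (hsum : ∀ n ≥ 1, ∑ i ∈ Finset.Icc 1 n, a n i = 1)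
    (hdev : Tendsto (fun n : ℕ => ∑ i ∈ Finset.Icc 1 n, |1 / (n : ℝ) - a n i|)
      atTop (𝓝 0))
    (x : X) (t₀ : ℝ) (ht₀ : 0 < t₀) :
    TendstoUniformlyOn
      (fun (n : ℕ) (t : ℝ) =>
        ((V (t / n)) ^ n) x - (List.ofFn fun i : Fin n => V (a n (i.1 + 1) * t)).prod x)
      (fun _ => 0) atTop (Icc 0 t₀) := by
  -- notation for the deviation
  set d : ℕ → ℝ := fun n => ∑ i ∈ Finset.Icc 1 n, |1 / (n : ℝ) - a n i| with hd
  -- core estimate for y ∈ D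
  have core : ∀ y ∈ D, ∀ ε > 0, ∀ᶠ n in atTop, ∀ t ∈ Icc (0:ℝ) t₀,
      ‖((V (t / n)) ^ n) y - (List.ofFn fun i : Fin n => V (a n (i.1 + 1) * t)).prod y‖
        ≤ ε := by
    intro y hy ε hε
    set ε' : ℝ := ε / (3 * t₀) with hε'
    have hε'pos : 0 < ε' := by positivity
    -- quantitative differentiability
    obtain ⟨δ, hδpos, hδ⟩ := (Metric.tendsto_nhdsWithin_nhds).1 (hA y hy) ε' hε'pos
    have key : ∀ s, 0 ≤ s → s < δ → ‖V s y - y - s • A y‖ ≤ ε' * s := by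
      intro s hs0 hsδ
      rcases eq_or_lt_of_le hs0 with h | h
      · simp [← h, hV0]
      · have := hδ (Set.mem_Ioi.2 h) (by rwa [Real.dist_eq, sub_zero, abs_of_pos h])
        rw [dist_eq_norm] at this
        have hne : s ≠ 0 := ne_of_gt h
        have : ‖s • (s⁻¹ • (V s y - y) - A y)‖ ≤ ε' * s := by
          rw [norm_smul, Real.norm_eq_abs, abs_of_pos h, mul_comm]
          exact mul_le_mul_of_nonneg_right this.le hs0
        rwa [smul_sub, smul_inv_smul₀ hne] at this
    -- eventual conditions on n
    have h1 : ∀ᶠ n : ℕ in atTop, (1:ℕ) ≤ n := eventually_ge_atTop 1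
    have h2 : ∀ᶠ n : ℕ in atTop, t₀ / n < δ := by
      have : Tendsto (fun n : ℕ => t₀ / n) atTop (𝓝 0) :=
        tendsto_const_nhds.div_atTop tendsto_natCast_atTop_atTop
      exact this.eventually_lt_const hδpos
    have h3 : ∀ᶠ n : ℕ in atTop, (1 / (n:ℝ) + d n) * t₀ < δ := by
      have hlim : Tendsto (fun n : ℕ => (1 / (n:ℝ) + d n) * t₀) atTop (𝓝 ((0 + 0) * t₀)) := by
        exact (Tendsto.add (tendsto_one_div_atTop_nhds_zero_nat) hdev).mul_const t₀
      rw [show ((0:ℝ) + 0) * t₀ = 0 by ring] at hlim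
      exact hlim.eventually_lt_const hδpos
    have h4 : ∀ᶠ n : ℕ in atTop, ‖A y‖ * (t₀ * d n) < ε / 3 := by
      have hlim : Tendsto (fun n : ℕ => ‖A y‖ * (t₀ * d n)) atTop (𝓝 (‖A y‖ * (t₀ * 0))) :=
        (hdev.const_mul t₀).const_mul ‖A y‖
      rw [show ‖A y‖ * (t₀ * (0:ℝ)) = 0 by ring] at hlim
      exact hlim.eventually_lt_const (by positivity)
    filter_upwards [h1, h2, h3, h4] with n hn1 hn2 hn3 hn4 t ht
    obtain ⟨ht0, htt0⟩ := ht
    have hnpos : (0:ℝ) < n := by exact_mod_cast hn1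
    have hdn0 : 0 ≤ d n := Finset.sum_nonneg fun i _ => abs_nonneg _
    -- the telescope bound
    set L : List (X →L[ℝ] X) := List.ofFn fun i : Fin n => V (a n (i.1 + 1) * t) with hL
    have hmem : ∀ T ∈ L, ∃ i : Fin n, T = V (a n (i.1 + 1) * t) := by
      intro T hT
      rw [hL, List.mem_ofFn] at hT
      obtain ⟨i, hi⟩ := hT
      exact ⟨i, hi.symm⟩
    have hapos : ∀ i : Fin n, 0 < a n (i.1 + 1) :=
      fun i => hpos n hn1 _ (Finset.mem_Icc.2 ⟨Nat.le_add_left 1 i.1, i.2⟩)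
    have htn0 : 0 ≤ t / n := div_nonneg ht0 hnpos.le
    have hLc : ∀ T ∈ L, ‖T‖ ≤ 1 ∧ T * V (t / n) = V (t / n) * T := by
      intro T hT
      obtain ⟨i, hi⟩ := hmem T hT
      have hat0 : 0 ≤ a n (i.1 + 1) * t := mul_nonneg (hapos i).le ht0
      exact ⟨hi ▸ hcontr _ hat0, hi ▸ hcomm _ hat0 _ htn0⟩
    have hlen : L.length = n := by simp [hL]
    have tele := aux_telescope (V (t / n)) (hcontr _ htn0) L hLc y
    rw [hlen] at tele
    refine tele.trans ?_
    -- rewrite the sum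
    have hsum_eq : (L.map fun T => ‖(V (t / n) - T) y‖).sum
        = ∑ i : Fin n, ‖(V (t / n) - V (a n (i.1 + 1) * t)) y‖ := by
      rw [hL, List.map_ofFn, List.sum_ofFn]
      rfl
    rw [hsum_eq]
    -- per-term bound
    have habound : ∀ i : Fin n, a n (i.1 + 1) * t < δ := by
      intro i
      have h1 : a n (i.1 + 1) ≤ 1 / n + d n := by
        have : |1 / (n:ℝ) - a n (i.1 + 1)| ≤ d n := by
          exact Finset.single_le_sum (f := fun i => |1 / (n:ℝ) - a n i|)
            (fun i _ => abs_nonneg _) (Finset.mem_Icc.2 ⟨Nat.le_add_left 1 i.1, i.2⟩)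
        have := neg_abs_le (1 / (n:ℝ) - a n (i.1 + 1))
        linarith [abs_le.1 ‹|1 / (n:ℝ) - a n (i.1 + 1)| ≤ d n›]
      calc a n (i.1 + 1) * t ≤ (1 / n + d n) * t₀ := by
            apply mul_le_mul h1 htt0 ht0
            positivity
        _ < δ := hn3
    have hterm : ∀ i : Fin n,
        ‖(V (t / n) - V (a n (i.1 + 1) * t)) y‖
          ≤ ε' * (t / n) + ε' * (a n (i.1 + 1) * t) + ‖A y‖ * (|1 / (n:ℝ) - a n (i.1 + 1)| * t) := by
      intro i
      have e1 := key (t / n) htn0 (lt_of_le_of_lt (by gcongr) hn2)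
      have e2 := key (a n (i.1 + 1) * t) (mul_nonneg (hapos i).le ht0) (habound i)
      have hid : (V (t / n) - V (a n (i.1 + 1) * t)) y
          = (V (t / n) y - y - (t / n) • A y) - (V (a n (i.1 + 1) * t) y - y - (a n (i.1 + 1) * t) • A y)
            + (t / n - a n (i.1 + 1) * t) • A y := by
        simp only [ContinuousLinearMap.sub_apply, sub_smul]
        abel
      rw [hid]
      calc ‖_ + _‖ ≤ ‖(V (t / n) y - y - (t / n) • A y) - (V (a n (i.1 + 1) * t) y - y - (a n (i.1 + 1) * t) • A y)‖
            + ‖(t / n - a n (i.1 + 1) * t) • A y‖ := norm_add_le _ _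
        _ ≤ (‖V (t / n) y - y - (t / n) • A y‖ + ‖V (a n (i.1 + 1) * t) y - y - (a n (i.1 + 1) * t) • A y‖)
            + |t / n - a n (i.1 + 1) * t| * ‖A y‖ := by
            gcongr
            · exact norm_sub_le _ _
            · rw [norm_smul, Real.norm_eq_abs]
        _ ≤ ε' * (t / n) + ε' * (a n (i.1 + 1) * t) + ‖A y‖ * (|1 / (n:ℝ) - a n (i.1 + 1)| * t) := by
            have : |t / n - a n (i.1 + 1) * t| = |1 / (n:ℝ) - a n (i.1 + 1)| * t := by
              rw [← abs_of_nonneg ht0, ← abs_mul]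
              congr 1
              rw [abs_of_nonneg ht0]
              ring
            rw [this]
            have := e1; have := e2
            nlinarith [norm_nonneg (A y), abs_nonneg (1 / (n:ℝ) - a n (i.1 + 1)), ht0]
    -- sum the bounds
    have hsum1 : ∑ i : Fin n, (ε' * (t / n)) = ε' * t := by
      rw [Finset.sum_const, Finset.card_univ, Fintype.card_fin, nsmul_eq_mul]
      field_simp
    have hsum2 : ∑ i : Fin n, (ε' * (a n (i.1 + 1) * t)) = ε' * t := by
      rw [← Finset.mul_sum]
      congr 1
      rw [← Finset.sum_mul]
      rw [aux_sum_fin (fun i => a n i) n, hsum n hn1, one_mul]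
    have hsum3 : ∑ i : Fin n, (‖A y‖ * (|1 / (n:ℝ) - a n (i.1 + 1)| * t)) = ‖A y‖ * (t * d n) := by
      rw [← Finset.mul_sum]
      congr 1
      rw [← Finset.sum_mul, aux_sum_fin (fun i => |1 / (n:ℝ) - a n i|) n]
      ring
    calc ∑ i : Fin n, ‖(V (t / n) - V (a n (i.1 + 1) * t)) y‖
        ≤ ∑ i : Fin n, (ε' * (t / n) + ε' * (a n (i.1 + 1) * t)
            + ‖A y‖ * (|1 / (n:ℝ) - a n (i.1 + 1)| * t)) :=
          Finset.sum_le_sum fun i _ => hterm i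
      _ = ε' * t + ε' * t + ‖A y‖ * (t * d n) := by
          rw [Finset.sum_add_distrib, Finset.sum_add_distrib, hsum1, hsum2, hsum3]
      _ ≤ ε / 3 + ε / 3 + ε / 3 := by
          have hb : ε' * t ≤ ε / 3 := by
            calc ε' * t ≤ ε' * t₀ := by gcongr
              _ = ε / 3 := by rw [hε']; field_simp
          have hc : ‖A y‖ * (t * d n) ≤ ε / 3 := by
            refine le_trans ?_ hn4.le
            gcongr

          linarith
      _ = ε := by ring
  -- density argument
  rw [Metric.tendstoUniformlyOn_iff]
  intro ε hε
  obtain ⟨y, hyD, hxy⟩ : ∃ y ∈ (D : Set X), dist x y < ε / 4 := by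
    have := hD.exists_dist_lt x (show (0:ℝ) < ε / 4 by positivity)
    exact this
  have hcore := core y hyD (ε / 4) (by positivity)
  filter_upwards [hcore, eventually_ge_atTop 1] with n hn hn1 t ht
  obtain ⟨ht0, htt0⟩ := ht
  have hnpos : (0:ℝ) < n := by exact_mod_cast hn1
  rw [dist_eq_norm, zero_sub, norm_neg]
  set L : List (X →L[ℝ] X) := List.ofFn fun i : Fin n => V (a n (i.1 + 1) * t) with hL
  have hLc : ∀ T ∈ L, ‖T‖ ≤ 1 := by
    intro T hT
    rw [hL, List.mem_ofFn] at hT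
    obtain ⟨i, hi⟩ := hT
    have : 0 < a n (i.1 + 1) := hpos n hn1 _ (Finset.mem_Icc.2 ⟨Nat.le_add_left 1 i.1, i.2⟩)
    exact hi ▸ hcontr _ (mul_nonneg this.le ht0)
  have htn0 : 0 ≤ t / n := div_nonneg ht0 hnpos.le
  have hid : ((V (t / n)) ^ n) x - L.prod x
      = ((V (t / n)) ^ n) (x - y) - L.prod (x - y) + (((V (t / n)) ^ n) y - L.prod y) := by
    simp only [map_sub]
    abel
  rw [hid]
  have hb1 : ‖((V (t / n)) ^ n) (x - y)‖ ≤ ‖x - y‖ :=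
    aux_pow_contraction _ (hcontr _ htn0) n _
  have hb2 : ‖L.prod (x - y)‖ ≤ ‖x - y‖ := aux_prod_contraction L hLc _
  have hb3 := hn t ⟨ht0, htt0⟩
  have hxy' : ‖x - y‖ < ε / 4 := by rwa [dist_eq_norm] at hxy
  calc ‖_ + _‖ ≤ ‖((V (t / n)) ^ n) (x - y) - L.prod (x - y)‖ + ‖((V (t / n)) ^ n) y - L.prod y‖ :=
        norm_add_le _ _
    _ ≤ (‖((V (t / n)) ^ n) (x - y)‖ + ‖L.prod (x - y)‖) + ε / 4 := by
        gcongr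
        exact norm_sub_le _ _
    _ < ε := by linarith
end

section
/- Let (T₁(t))_{t≥0} and (T₂(t))_{t≥0} be strongly continuous contraction semigroups on a Banach space X with generators (A₁, D(A₁)) and (A₂, D(A₂)). Assume T₁(t)T₂(t') = T₂(t')T₁(t) for all t, t' ≥ 0, that A₁ + A₂ with domain D(A₁) ∩ D(A₂) is closed and generates a strongly continuous semigroup (T₃(t))_{t≥0}, and that for some λ₀ > 0 the subspace (λ₀ − A₁ − A₂)(D(A₁) ∩ D(A₂)) is dense in X. Let (a_{n,i})_{i=1}^n, n ∈ ℕ, be a triangular array of positive reals with Σ_{i=1}^n a_{n,i} = 1 for each n and lim_{n→∞} Σ_{i=1}^n |1/n − a_{n,i}| = 0. Then for every x ∈ X, T₃(t)x = lim_{n→∞} ∏_{i=1}^n T₁(a_{n,i} t) T₂(a_{n,i} t) x, uniformly for t ∈ [0, t₀] for any fixed t₀ > 0. -/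
open Filter Topology Set


section TrotterHelpers

variable {X : Type*} [NormedAddCommGroup X] [NormedSpace ℝ X] [CompleteSpace X]

/-- A subspace on which every vanishing continuous functional is zero is dense. -/
lemma trotter_aux_dense_of_dual (D : Submodule ℝ X)
    (h : ∀ f : X →L[ℝ] ℝ, (∀ x ∈ D, f x = 0) → f = 0) : Dense (D : Set X) := by
  by_contra hd
  rw [Dense] at hd
  push_neg at hd
  obtain ⟨x, hx⟩ := hd
  obtain ⟨f, u, hfu, hux⟩ := geometric_hahn_banach_closed_point
    (D.convex.closure) isClosed_closure hx
  have hf0 : ∀ y ∈ D, f y = 0 := by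
    intro y hy
    by_contra hfy
    have hmem : ((u + 1) / f y) • y ∈ D := D.smul_mem _ hy
    have h2 := hfu _ (subset_closure hmem)
    rw [map_smul, smul_eq_mul, div_mul_cancel₀ _ hfy] at h2
    linarith
  have hfz := h f hf0
  have h0 : (0 : ℝ) < u := by
    have := hfu 0 (subset_closure D.zero_mem)
    simpa using this
  rw [hfz] at hux
  simp at hux
  linarith

lemma trotter_aux_domain_invariant
    (T : ℝ → X →L[ℝ] X) (D : Submodule ℝ X) (A : X → X)
    (hA : ∀ x, x ∈ D ↔ ∃ y : X, Tendsto (fun h : ℝ => h⁻¹ • (T h x - x)) (𝓝[>] 0) (𝓝 y))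
    (hA' : ∀ x ∈ D, Tendsto (fun h : ℝ => h⁻¹ • (T h x - x)) (𝓝[>] 0) (𝓝 (A x)))
    (B : X →L[ℝ] X) (hB : ∀ h > (0:ℝ), ∀ z, T h (B z) = B (T h z))
    {x : X} (hx : x ∈ D) : B x ∈ D := by
  have key : Tendsto (fun h : ℝ => h⁻¹ • (T h (B x) - B x)) (𝓝[>] 0) (𝓝 (B (A x))) := by
    have h1 : Tendsto (fun h : ℝ => B (h⁻¹ • (T h x - x))) (𝓝[>] 0) (𝓝 (B (A x))) :=
      (B.continuous.tendsto _).comp (hA' x hx)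
    refine h1.congr' ?_
    filter_upwards [self_mem_nhdsWithin] with h hh
    rw [map_smul, map_sub, ← hB h hh x]
  exact (hA _).2 ⟨_, key⟩

end TrotterHelpers

section U
set_option linter.unusedSectionVars false

variable {X : Type*} [NormedAddCommGroup X] [NormedSpace ℝ X] [CompleteSpace X]

lemma trotter_aux_unique
    (S T : ℝ → X →L[ℝ] X)
    (hS0 : S 0 = 1) (hSsg : ∀ s ≥ (0:ℝ), ∀ t ≥ (0:ℝ), S (s + t) = S s * S t)
    (hScont : ∀ x : X, ContinuousOn (fun t => S t x) (Ici (0:ℝ)))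
    (hT0 : T 0 = 1) (hTsg : ∀ s ≥ (0:ℝ), ∀ t ≥ (0:ℝ), T (s + t) = T s * T t)
    (hTcont : ∀ x : X, ContinuousOn (fun t => T t x) (Ici (0:ℝ)))
    (D : Submodule ℝ X) (A : X → X)
    (hSD : ∀ s ≥ (0:ℝ), ∀ x ∈ D, S s x ∈ D)
    (hSgen : ∀ x ∈ D, Tendsto (fun h : ℝ => h⁻¹ • (S h x - x)) (𝓝[>] 0) (𝓝 (A x)))
    (hTgen : ∀ x ∈ D, Tendsto (fun h : ℝ => h⁻¹ • (T h x - x)) (𝓝[>] 0) (𝓝 (A x)))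
    (lam₀ : ℝ) (hrange : Dense ((fun x => lam₀ • x - A x) '' (D : Set X)))
    {t : ℝ} (ht : 0 ≤ t) : T t = S t := by
  -- density of D
  have hDdense : Dense (D : Set X) := by
    apply trotter_aux_dense_of_dual
    intro f hf
    have hfA : ∀ x ∈ D, f (A x) = 0 := by
      intro x hx
      have h1 : Tendsto (fun h : ℝ => f (h⁻¹ • (S h x - x))) (𝓝[>] 0) (𝓝 (f (A x))) :=
        (f.continuous.tendsto _).comp (hSgen x hx)
      have h2 : Tendsto (fun h : ℝ => f (h⁻¹ • (S h x - x))) (𝓝[>] 0) (𝓝 (0:ℝ)) := by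
        apply tendsto_const_nhds.congr'
        filter_upwards [self_mem_nhdsWithin] with h hh
        have hS : f (S h x) = 0 := hf _ (hSD h (le_of_lt hh) x hx)
        simp [map_smul, map_sub, hS, hf x hx]
      exact tendsto_nhds_unique h1 h2 ▸ rfl
    have heqon : EqOn (⇑f) (fun _ => (0:ℝ)) ((fun x => lam₀ • x - A x) '' (D : Set X)) := by
      rintro y ⟨x, hx, rfl⟩
      simp [map_smul, map_sub, hf x hx, hfA x hx]
    have hzero : (⇑f) = fun _ => (0:ℝ) :=
      Continuous.ext_on hrange f.continuous continuous_const heqon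
    exact ContinuousLinearMap.ext fun z => congrFun hzero z
  rcases ht.lt_or_eq with htpos | rfl
  swap
  · rw [hT0, hS0]
  -- a uniform bound for T on [0, t]
  obtain ⟨M, hMb⟩ : ∃ M, ∀ s : Icc (0:ℝ) t, ‖T s‖ ≤ M := by
    apply banach_steinhaus
    intro y
    obtain ⟨C, hC⟩ := (isCompact_Icc (a := (0:ℝ)) (b := t)).exists_bound_of_continuousOn
      ((hTcont y).mono Icc_subset_Ici_self)
    exact ⟨C, fun i => hC i i.2⟩
  have hM' : ∀ s ∈ Icc (0:ℝ) t, ‖T s‖ ≤ M := fun s hs => hMb ⟨s, hs⟩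
  -- agreement on D
  have hkey : ∀ x ∈ D, T t x = S t x := by
    intro x hx
    set φ : ℝ → X := fun s => T (t - s) (S s x) with hφ
    have φcont : ContinuousOn φ (Icc 0 t) := by
      intro s₀ hs₀
      have hts₀ : t - s₀ ∈ Ici (0:ℝ) := sub_nonneg.2 hs₀.2
      have hSx : Tendsto (fun s => S s x) (𝓝[Icc 0 t] s₀) (𝓝 (S s₀ x)) :=
        ((hScont x) s₀ hs₀.1).mono Icc_subset_Ici_self
      have hmap : Tendsto (fun s => t - s) (𝓝[Icc 0 t] s₀) (𝓝[Ici 0] (t - s₀)) := by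
        rw [tendsto_nhdsWithin_iff]
        constructor
        · exact ((continuous_const.sub continuous_id).tendsto s₀).mono_left nhdsWithin_le_nhds
        · filter_upwards [self_mem_nhdsWithin] with s hs
          exact sub_nonneg.2 hs.2
      have hT2 : Tendsto (fun s => T (t - s) (S s₀ x)) (𝓝[Icc 0 t] s₀)
          (𝓝 (T (t - s₀) (S s₀ x))) :=
        Filter.Tendsto.comp ((hTcont (S s₀ x)) (t - s₀) hts₀) hmap
      have hfirst : Tendsto (fun s => T (t - s) (S s x - S s₀ x)) (𝓝[Icc 0 t] s₀) (𝓝 0) := by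
        apply squeeze_zero_norm' (a := fun s => M * ‖S s x - S s₀ x‖)
        · filter_upwards [self_mem_nhdsWithin] with s hs
          calc ‖T (t - s) (S s x - S s₀ x)‖ ≤ ‖T (t - s)‖ * ‖S s x - S s₀ x‖ :=
                (T (t - s)).le_opNorm _
            _ ≤ M * ‖S s x - S s₀ x‖ := by
                apply mul_le_mul_of_nonneg_right _ (norm_nonneg _)
                exact hM' _ ⟨sub_nonneg.2 hs.2, by linarith [hs.1]⟩
        · have := (hSx.sub (tendsto_const_nhds (x := S s₀ x))).norm
          simpa using this.const_mul M
      have hsum := hfirst.add hT2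
      have : Tendsto φ (𝓝[Icc 0 t] s₀) (𝓝 (0 + T (t - s₀) (S s₀ x))) := by
        apply hsum.congr
        intro s
        simp [hφ, map_sub]
      simpa [hφ, ContinuousWithinAt] using this
    have φderiv : ∀ s ∈ Ico (0:ℝ) t, HasDerivWithinAt φ 0 (Ici s) s := by
      intro s hs
      have hts : 0 < t - s := sub_pos.2 hs.2
      have hyD : S s x ∈ D := hSD s hs.1 x hx
      rw [hasDerivWithinAt_iff_tendsto_slope, Ici_sdiff_left]
      have hmap : Tendsto (fun u => u - s) (𝓝[>] s) (𝓝[>] (0:ℝ)) := by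
        rw [tendsto_nhdsWithin_iff]
        constructor
        · have h1 : Tendsto (fun u : ℝ => u - s) (𝓝 s) (𝓝 (s - s)) :=
            (continuous_id.sub continuous_const).tendsto s
          rw [sub_self] at h1
          exact h1.mono_left nhdsWithin_le_nhds
        · filter_upwards [self_mem_nhdsWithin] with u hu
          exact sub_pos.2 (Set.mem_Ioi.1 hu)
      set y := S s x
      have hg : Tendsto (fun h : ℝ => h⁻¹ • (S h y - y) - h⁻¹ • (T h y - y)) (𝓝[>] 0)
          (𝓝 0) := by
        have := (hSgen y hyD).sub (hTgen y hyD)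
        simpa using this
      have hq : Tendsto (fun h : ℝ => h⁻¹ • (φ (s + h) - φ s)) (𝓝[>] 0) (𝓝 0) := by
        apply squeeze_zero_norm'
          (a := fun h => M * ‖h⁻¹ • (S h y - y) - h⁻¹ • (T h y - y)‖)
        · filter_upwards [Ioo_mem_nhdsGT_of_mem ⟨le_refl (0:ℝ), hts⟩] with h hh
          have h0 : (0:ℝ) < h := hh.1
          have heq : h⁻¹ • (φ (s + h) - φ s)
              = T (t - s - h) (h⁻¹ • (S h y - y) - h⁻¹ • (T h y - y)) := by
            have e1 : φ (s + h) = T (t - s - h) (S h y) := by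
              show T (t - (s + h)) (S (s + h) x) = _
              rw [add_comm s h, hSsg h h0.le s hs.1,
                show t - (h + s) = t - s - h by ring]
              rfl
            have e2 : φ s = T (t - s - h) (T h y) := by
              have e3 := hTsg (t - s - h) (by linarith [hh.2]) h h0.le
              rw [show t - s - h + h = t - s by ring] at e3
              show T (t - s) y = _
              rw [e3]
              rfl
            rw [e1, e2, ← map_sub, ← map_smul]
            congr 1
            rw [← smul_sub]
            congr 1
            abel
          rw [heq]
          calc ‖T (t - s - h) (h⁻¹ • (S h y - y) - h⁻¹ • (T h y - y))‖
              ≤ ‖T (t - s - h)‖ * ‖h⁻¹ • (S h y - y) - h⁻¹ • (T h y - y)‖ :=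
                (T _).le_opNorm _
            _ ≤ M * ‖h⁻¹ • (S h y - y) - h⁻¹ • (T h y - y)‖ := by
                apply mul_le_mul_of_nonneg_right _ (norm_nonneg _)
                exact hM' _ ⟨by linarith [hh.2], by linarith [hs.1, h0]⟩
        · simpa using hg.norm.const_mul M
      have hcomp := hq.comp hmap
      apply hcomp.congr
      intro u
      simp only [Function.comp]
      rw [slope_def_module]
      rw [add_sub_cancel]
    have hconst := constant_of_has_deriv_right_zero φcont φderiv t (right_mem_Icc.2 ht)
    have : T 0 (S t x) = T t (S 0 x) := by
      simpa [hφ] using hconst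
    rw [hS0, hT0] at this
    simpa using this.symm
  have hext : (⇑(T t)) = (⇑(S t)) :=
    Continuous.ext_on hDdense (T t).continuous (S t).continuous fun x hx => hkey x hx
  exact ContinuousLinearMap.ext fun z => congrFun hext z

end U

section P
set_option linter.unusedSectionVars false

variable {X : Type*} [NormedAddCommGroup X] [NormedSpace ℝ X] [CompleteSpace X]

lemma trotter_aux_sum_Icc (f : ℕ → ℝ) (n : ℕ) :
    ∑ i ∈ Finset.range n, f (i + 1) = ∑ i ∈ Finset.Icc 1 n, f i := by
  induction n with
  | zero => simp
  | succ n ih =>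
      rw [Finset.sum_range_succ, ih,
        Finset.sum_Icc_succ_top (Nat.succ_le_succ (Nat.zero_le n))]

lemma trotter_aux_prod (T₁ T₂ : ℝ → X →L[ℝ] X)
    (hT₁0 : T₁ 0 = 1)
    (hT₁sg : ∀ s ≥ (0 : ℝ), ∀ t ≥ (0 : ℝ), T₁ (s + t) = T₁ s * T₁ t)
    (hT₂0 : T₂ 0 = 1)
    (hT₂sg : ∀ s ≥ (0 : ℝ), ∀ t ≥ (0 : ℝ), T₂ (s + t) = T₂ s * T₂ t)
    (hcomm : ∀ t ≥ (0 : ℝ), ∀ t' ≥ (0 : ℝ), T₁ t * T₂ t' = T₂ t' * T₁ t)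
    (n : ℕ) :
    ∀ (c : Fin n → ℝ), (∀ i, 0 ≤ c i) → ∀ t, 0 ≤ t →
      (List.ofFn fun i => T₁ (c i * t) * T₂ (c i * t)).prod
        = T₁ ((∑ i, c i) * t) * T₂ ((∑ i, c i) * t) := by
  induction n with
  | zero =>
      intro c _ t _
      simp [hT₁0, hT₂0]
  | succ n ih =>
      intro c hc t ht
      rw [List.ofFn_succ, List.prod_cons, ih (fun i => c i.succ) (fun i => hc _) t ht]
      have hb : 0 ≤ ∑ i : Fin n, c i.succ := Finset.sum_nonneg fun i _ => hc _
      have hbt : 0 ≤ (∑ i : Fin n, c i.succ) * t := mul_nonneg hb ht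
      have h0t : 0 ≤ c 0 * t := mul_nonneg (hc 0) ht
      rw [Fin.sum_univ_succ, add_mul, hT₁sg _ h0t _ hbt, hT₂sg _ h0t _ hbt]
      have hmid : T₂ (c 0 * t) * T₁ ((∑ i : Fin n, c i.succ) * t)
          = T₁ ((∑ i : Fin n, c i.succ) * t) * T₂ (c 0 * t) :=
        (hcomm _ hbt _ h0t).symm
      calc T₁ (c 0 * t) * T₂ (c 0 * t)
            * (T₁ ((∑ i : Fin n, c i.succ) * t) * T₂ ((∑ i : Fin n, c i.succ) * t))
          = T₁ (c 0 * t) * ((T₂ (c 0 * t) * T₁ ((∑ i : Fin n, c i.succ) * t))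
            * T₂ ((∑ i : Fin n, c i.succ) * t)) := by simp only [mul_assoc]
        _ = T₁ (c 0 * t) * ((T₁ ((∑ i : Fin n, c i.succ) * t) * T₂ (c 0 * t))
            * T₂ ((∑ i : Fin n, c i.succ) * t)) := by rw [hmid]
        _ = T₁ (c 0 * t) * T₁ ((∑ i : Fin n, c i.succ) * t)
            * (T₂ (c 0 * t) * T₂ ((∑ i : Fin n, c i.succ) * t)) := by simp only [mul_assoc]

end P

/-- Corollary 1 (non-uniform Lie–Trotter product formula).  Let `(T₁ t)` and `(T₂ t)` be
strongly continuous contraction semigroups on a Banach space `X` with generators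
`(A₁, D₁)` and `(A₂, D₂)`, commuting with each other.  Assume `A₁ + A₂` on `D₁ ∩ D₂` is
closed (i.e. has closed graph), generates a strongly continuous semigroup `(T₃ t)`, and
`(λ₀ - A₁ - A₂)(D₁ ∩ D₂)` is dense for some `λ₀ > 0`.  If `(a n i)_{i=1}^n` is a
triangular array of positive reals with row sums `1` and
`lim_n ∑_{i=1}^n |1/n - a n i| = 0`, then for every `x ∈ X`,
`T₃ t x = lim_n ∏_{i=1}^n T₁ (a n i * t) T₂ (a n i * t) x`, uniformly on `[0, t₀]`. -/
theorem trotter_nonuniform_product_formula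
    {X : Type*} [NormedAddCommGroup X] [NormedSpace ℝ X] [CompleteSpace X]
    (T₁ T₂ T₃ : ℝ → X →L[ℝ] X)
    -- `T₁` is a strongly continuous contraction semigroup:
    (hT₁0 : T₁ 0 = 1)
    (hT₁sg : ∀ s ≥ (0 : ℝ), ∀ t ≥ (0 : ℝ), T₁ (s + t) = T₁ s * T₁ t)
    (hT₁cont : ∀ x : X, ContinuousOn (fun t => T₁ t x) (Ici (0 : ℝ)))
    (hT₁contr : ∀ t ≥ (0 : ℝ), ‖T₁ t‖ ≤ 1)
    -- `T₂` is a strongly continuous contraction semigroup: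
    (hT₂0 : T₂ 0 = 1)
    (hT₂sg : ∀ s ≥ (0 : ℝ), ∀ t ≥ (0 : ℝ), T₂ (s + t) = T₂ s * T₂ t)
    (hT₂cont : ∀ x : X, ContinuousOn (fun t => T₂ t x) (Ici (0 : ℝ)))
    (hT₂contr : ∀ t ≥ (0 : ℝ), ‖T₂ t‖ ≤ 1)
    -- they commute:
    (hcomm : ∀ t ≥ (0 : ℝ), ∀ t' ≥ (0 : ℝ), T₁ t * T₂ t' = T₂ t' * T₁ t)
    -- generators `(A₁, D₁)` and `(A₂, D₂)`:
    (D₁ D₂ : Submodule ℝ X) (A₁ A₂ : X → X)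
    (hA₁ : ∀ x, x ∈ D₁ ↔ ∃ y : X,
      Tendsto (fun h : ℝ => h⁻¹ • (T₁ h x - x)) (𝓝[>] 0) (𝓝 y))
    (hA₁' : ∀ x ∈ D₁, Tendsto (fun h : ℝ => h⁻¹ • (T₁ h x - x)) (𝓝[>] 0) (𝓝 (A₁ x)))
    (hA₂ : ∀ x, x ∈ D₂ ↔ ∃ y : X,
      Tendsto (fun h : ℝ => h⁻¹ • (T₂ h x - x)) (𝓝[>] 0) (𝓝 y))
    (hA₂' : ∀ x ∈ D₂, Tendsto (fun h : ℝ => h⁻¹ • (T₂ h x - x)) (𝓝[>] 0) (𝓝 (A₂ x)))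
    -- `A₁ + A₂` with domain `D₁ ∩ D₂` is closed:
    (hclosed : IsClosed {p : X × X | p.1 ∈ (D₁ ⊓ D₂ : Submodule ℝ X) ∧
      p.2 = A₁ p.1 + A₂ p.1})
    -- `(λ₀ - A₁ - A₂)(D₁ ∩ D₂)` is dense for some `λ₀ > 0`:
    (lam₀ : ℝ) (hlam₀ : 0 < lam₀)
    (hrange : Dense ((fun x => lam₀ • x - (A₁ x + A₂ x)) ''
      ((D₁ ⊓ D₂ : Submodule ℝ X) : Set X)))
    -- `A₁ + A₂` generates the strongly continuous semigroup `T₃`: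
    (hT₃0 : T₃ 0 = 1)
    (hT₃sg : ∀ s ≥ (0 : ℝ), ∀ t ≥ (0 : ℝ), T₃ (s + t) = T₃ s * T₃ t)
    (hT₃cont : ∀ x : X, ContinuousOn (fun t => T₃ t x) (Ici (0 : ℝ)))
    (hT₃gen : ∀ x ∈ (D₁ ⊓ D₂ : Submodule ℝ X),
      Tendsto (fun h : ℝ => h⁻¹ • (T₃ h x - x)) (𝓝[>] 0) (𝓝 (A₁ x + A₂ x)))
    -- the triangular array:
    (a : ℕ → ℕ → ℝ)
    (hpos : ∀ n ≥ 1, ∀ i ∈ Finset.Icc 1 n, 0 < a n i)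
    (hsum : ∀ n ≥ 1, ∑ i ∈ Finset.Icc 1 n, a n i = 1)
    (hdev : Tendsto (fun n : ℕ => ∑ i ∈ Finset.Icc 1 n, |1 / (n : ℝ) - a n i|)
      atTop (𝓝 0))
    (x : X) (t₀ : ℝ) (ht₀ : 0 < t₀) :
    TendstoUniformlyOn
      (fun (n : ℕ) (t : ℝ) =>
        (List.ofFn fun i : Fin n => T₁ (a n (i.1 + 1) * t) * T₂ (a n (i.1 + 1) * t)).prod x)
      (fun t => T₃ t x) atTop (Icc 0 t₀) := by
  set S : ℝ → X →L[ℝ] X := fun s => T₁ s * T₂ s with hSdef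
  -- S is a strongly continuous semigroup
  have hS0 : S 0 = 1 := by simp [hSdef, hT₁0, hT₂0]
  have hSsg : ∀ s ≥ (0:ℝ), ∀ u ≥ (0:ℝ), S (s + u) = S s * S u := by
    intro s hs u hu
    have hc := hcomm u hu s hs
    simp only [hSdef]
    rw [hT₁sg s hs u hu, hT₂sg s hs u hu]
    calc T₁ s * T₁ u * (T₂ s * T₂ u)
        = T₁ s * ((T₁ u * T₂ s) * T₂ u) := by simp only [mul_assoc]
      _ = T₁ s * ((T₂ s * T₁ u) * T₂ u) := by rw [hc]
      _ = T₁ s * T₂ s * (T₁ u * T₂ u) := by simp only [mul_assoc]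
  have hScont : ∀ z : X, ContinuousOn (fun s => S s z) (Ici (0:ℝ)) := by
    intro z s₀ hs₀
    have h2 : Tendsto (fun s => T₂ s z) (𝓝[Ici 0] s₀) (𝓝 (T₂ s₀ z)) := (hT₂cont z) s₀ hs₀
    have hfirst : Tendsto (fun s => T₁ s (T₂ s z - T₂ s₀ z)) (𝓝[Ici 0] s₀) (𝓝 0) := by
      apply squeeze_zero_norm' (a := fun s => ‖T₂ s z - T₂ s₀ z‖)
      · filter_upwards [self_mem_nhdsWithin] with s hs
        calc ‖T₁ s (T₂ s z - T₂ s₀ z)‖ ≤ ‖T₁ s‖ * ‖T₂ s z - T₂ s₀ z‖ := (T₁ s).le_opNorm _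
          _ ≤ 1 * ‖T₂ s z - T₂ s₀ z‖ :=
              mul_le_mul_of_nonneg_right (hT₁contr s hs) (norm_nonneg _)
          _ = ‖T₂ s z - T₂ s₀ z‖ := one_mul _
      · have := (h2.sub (tendsto_const_nhds (x := T₂ s₀ z))).norm
        simpa using this
    have hsecond : Tendsto (fun s => T₁ s (T₂ s₀ z)) (𝓝[Ici 0] s₀) (𝓝 (T₁ s₀ (T₂ s₀ z))) :=
      (hT₁cont (T₂ s₀ z)) s₀ hs₀
    have := hfirst.add hsecond
    have h3 : Tendsto (fun s => S s z) (𝓝[Ici 0] s₀) (𝓝 (0 + T₁ s₀ (T₂ s₀ z))) := by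
      apply this.congr
      intro s
      simp [hSdef, map_sub]
    simpa [hSdef, ContinuousWithinAt] using h3
  -- commutation at the level of vectors
  have comm12 : ∀ u ≥ (0:ℝ), ∀ h > (0:ℝ), ∀ z : X, T₁ h (T₂ u z) = T₂ u (T₁ h z) := by
    intro u hu h hh z
    have hc := hcomm h hh.le u hu
    calc T₁ h (T₂ u z) = (T₁ h * T₂ u) z := rfl
      _ = (T₂ u * T₁ h) z := by rw [hc]
      _ = T₂ u (T₁ h z) := rfl
  have comm21 : ∀ u ≥ (0:ℝ), ∀ h > (0:ℝ), ∀ z : X, T₂ h (T₁ u z) = T₁ u (T₂ h z) := by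
    intro u hu h hh z
    have hc := hcomm u hu h hh.le
    calc T₂ h (T₁ u z) = (T₂ h * T₁ u) z := rfl
      _ = (T₁ u * T₂ h) z := by rw [hc]
      _ = T₁ u (T₂ h z) := rfl
  have comm11 : ∀ u ≥ (0:ℝ), ∀ h > (0:ℝ), ∀ z : X, T₁ h (T₁ u z) = T₁ u (T₁ h z) := by
    intro u hu h hh z
    have e : T₁ h * T₁ u = T₁ u * T₁ h := by
      rw [← hT₁sg h hh.le u hu, ← hT₁sg u hu h hh.le, add_comm]
    calc T₁ h (T₁ u z) = (T₁ h * T₁ u) z := rfl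
      _ = (T₁ u * T₁ h) z := by rw [e]
      _ = T₁ u (T₁ h z) := rfl
  have comm22 : ∀ u ≥ (0:ℝ), ∀ h > (0:ℝ), ∀ z : X, T₂ h (T₂ u z) = T₂ u (T₂ h z) := by
    intro u hu h hh z
    have e : T₂ h * T₂ u = T₂ u * T₂ h := by
      rw [← hT₂sg h hh.le u hu, ← hT₂sg u hu h hh.le, add_comm]
    calc T₂ h (T₂ u z) = (T₂ h * T₂ u) z := rfl
      _ = (T₂ u * T₂ h) z := by rw [e]
      _ = T₂ u (T₂ h z) := rfl
  -- S leaves D₁ ⊓ D₂ invariant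
  have hSD : ∀ s ≥ (0:ℝ), ∀ z ∈ (D₁ ⊓ D₂ : Submodule ℝ X), S s z ∈ (D₁ ⊓ D₂ : Submodule ℝ X) := by
    intro s hs z hz
    obtain ⟨hz₁, hz₂⟩ := Submodule.mem_inf.1 hz
    have s1 : T₂ s z ∈ D₁ :=
      trotter_aux_domain_invariant T₁ D₁ A₁ hA₁ hA₁' (T₂ s) (fun h hh w => comm12 s hs h hh w) hz₁
    have s2 : T₂ s z ∈ D₂ :=
      trotter_aux_domain_invariant T₂ D₂ A₂ hA₂ hA₂' (T₂ s) (fun h hh w => comm22 s hs h hh w) hz₂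
    have s3 : T₁ s (T₂ s z) ∈ D₁ :=
      trotter_aux_domain_invariant T₁ D₁ A₁ hA₁ hA₁' (T₁ s) (fun h hh w => comm11 s hs h hh w) s1
    have s4 : T₁ s (T₂ s z) ∈ D₂ :=
      trotter_aux_domain_invariant T₂ D₂ A₂ hA₂ hA₂' (T₁ s) (fun h hh w => comm21 s hs h hh w) s2
    exact Submodule.mem_inf.2 ⟨s3, s4⟩
  -- the generator of S on D₁ ⊓ D₂
  have hSgen : ∀ z ∈ (D₁ ⊓ D₂ : Submodule ℝ X),
      Tendsto (fun h : ℝ => h⁻¹ • (S h z - z)) (𝓝[>] 0) (𝓝 (A₁ z + A₂ z)) := by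
    intro z hz
    obtain ⟨hz₁, hz₂⟩ := Submodule.mem_inf.1 hz
    have hq₂ := hA₂' z hz₂
    have hpart1 : Tendsto (fun h : ℝ => T₁ h (h⁻¹ • (T₂ h z - z))) (𝓝[>] 0) (𝓝 (A₂ z)) := by
      have hzero : Tendsto (fun h : ℝ => T₁ h (h⁻¹ • (T₂ h z - z) - A₂ z)) (𝓝[>] 0) (𝓝 0) := by
        apply squeeze_zero_norm' (a := fun h => ‖h⁻¹ • (T₂ h z - z) - A₂ z‖)
        · filter_upwards [self_mem_nhdsWithin] with h hh
          calc ‖T₁ h (h⁻¹ • (T₂ h z - z) - A₂ z)‖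
              ≤ ‖T₁ h‖ * ‖h⁻¹ • (T₂ h z - z) - A₂ z‖ := (T₁ h).le_opNorm _
            _ ≤ 1 * ‖h⁻¹ • (T₂ h z - z) - A₂ z‖ :=
                mul_le_mul_of_nonneg_right (hT₁contr h (le_of_lt hh)) (norm_nonneg _)
            _ = _ := one_mul _
        · have := (hq₂.sub (tendsto_const_nhds (x := A₂ z))).norm
          simpa using this
      have hcst : Tendsto (fun h : ℝ => T₁ h (A₂ z)) (𝓝[>] 0) (𝓝 (A₂ z)) := by
        have hc := ((hT₁cont (A₂ z)) 0 self_mem_Ici).mono Ioi_subset_Ici_self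
        rw [ContinuousWithinAt] at hc
        rw [hT₁0] at hc
        simpa using hc
      have hadd := hzero.add hcst
      rw [zero_add] at hadd
      apply hadd.congr
      intro h
      rw [map_sub, sub_add_cancel]
    have hadd2 := hpart1.add (hA₁' z hz₁)
    have hgoal : Tendsto (fun h : ℝ => h⁻¹ • (S h z - z)) (𝓝[>] 0) (𝓝 (A₂ z + A₁ z)) := by
      apply hadd2.congr
      intro h
      have e1 : T₁ h (h⁻¹ • (T₂ h z - z)) = h⁻¹ • (T₁ h (T₂ h z) - T₁ h z) := by
        rw [map_smul, map_sub]
      rw [e1, ← smul_add, sub_add_sub_cancel]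
      rfl
    rwa [add_comm] at hgoal
  -- uniqueness: T₃ = S on [0, ∞)
  have huniq : ∀ t ≥ (0:ℝ), T₃ t = S t := fun t ht =>
    trotter_aux_unique S T₃ hS0 hSsg hScont hT₃0 hT₃sg hT₃cont (D₁ ⊓ D₂)
      (fun z => A₁ z + A₂ z) hSD hSgen hT₃gen lam₀ hrange ht
  -- the approximating products are all equal to S t
  have hprodeq : ∀ n : ℕ, 1 ≤ n → ∀ t ∈ Icc (0:ℝ) t₀,
      (List.ofFn fun i : Fin n =>
        T₁ (a n (i.1 + 1) * t) * T₂ (a n (i.1 + 1) * t)).prod x = T₃ t x := by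
    intro n hn t ht
    have hcnn : ∀ i : Fin n, 0 ≤ a n (i.1 + 1) := by
      intro i
      exact (hpos n hn (i.1 + 1)
        (Finset.mem_Icc.2 ⟨Nat.succ_le_succ (Nat.zero_le _), Nat.succ_le_of_lt i.2⟩)).le
    have hcsum : ∑ i : Fin n, a n (i.1 + 1) = 1 := by
      rw [Fin.sum_univ_eq_sum_range (fun j => a n (j + 1)) n, trotter_aux_sum_Icc]
      exact hsum n hn
    have hprod := trotter_aux_prod T₁ T₂ hT₁0 hT₁sg hT₂0 hT₂sg hcomm n
      (fun i : Fin n => a n (i.1 + 1)) hcnn t ht.1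
    rw [hprod, hcsum, one_mul, huniq t ht.1]
  -- conclude
  rw [Metric.tendstoUniformlyOn_iff]
  intro ε hε
  filter_upwards [eventually_ge_atTop 1] with n hn
  intro t ht
  rw [hprodeq n hn t ht]
  simpa using hε
end

section
/- Let ξ be a real random variable with mean 0 and variance 1 whose law has a density p_ξ ∈ C₀(ℝ), and for t > 0 define (V_ξ(t)f)(x) = ∫_ℝ f(x − √t·y) p_ξ(y) dy on C₀(ℝ), with V_ξ(0) = I. Then for every f ∈ C₀(ℝ) that is twice differentiable with f' and f'' in C₀(ℝ), the limit lim_{h→0⁺} (V_ξ(h)f − f)/h exists in the supremum norm and equals (1/2) f''. -/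
open Filter Topology MeasureTheory Set

lemma abs_le_of_mem_uIcc {t v : ℝ} (hv : v ∈ Set.uIcc (0:ℝ) t) : |v| ≤ |t| := by
  rw [Set.uIcc] at hv
  rcases hv with ⟨h1, h2⟩
  refine abs_le.2 ⟨?_, ?_⟩
  · exact le_trans (le_min (neg_nonpos.2 (abs_nonneg t)) (neg_abs_le t)) h1
  · exact le_trans h2 (max_le (abs_nonneg t) (le_abs_self t))

lemma taylor_aux {f f' f'' : ℝ → ℝ} (hf' : ∀ x, HasDerivAt f (f' x) x)
    (hf'' : ∀ x, HasDerivAt f' (f'' x) x) (x : ℝ) {C r u : ℝ}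
    (hC : ∀ v, |v| ≤ r → |f'' (x + v) - f'' x| ≤ C) (hu : |u| ≤ r) :
    |f (x + u) - f x - u * f' x - u ^ 2 / 2 * f'' x| ≤ C * u ^ 2 := by
  have hφ' : ∀ t : ℝ, HasDerivAt (fun v => f (x + v) - f x - v * f' x - v ^ 2 / 2 * f'' x)
      (f' (x + t) - f' x - t * f'' x) t := by
    intro t
    have h1 : HasDerivAt (fun v : ℝ => f (x + v)) (f' (x + t)) t := by
      simpa [Function.comp_def] using (hf' (x + t)).comp t ((hasDerivAt_id t).const_add x)
    have h2 : HasDerivAt (fun v : ℝ => v * f' x) (f' x) t := by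
      simpa using (hasDerivAt_id t).mul_const (f' x)
    have h3 : HasDerivAt (fun v : ℝ => v ^ 2 / 2 * f'' x) (t * f'' x) t := by
      have := ((hasDerivAt_pow 2 t).div_const 2).mul_const (f'' x)
      refine this.congr_deriv ?_
      norm_num
    exact ((h1.sub_const (f x)).sub h2).sub h3
  have hφ'' : ∀ t : ℝ, HasDerivAt (fun v => f' (x + v) - f' x - v * f'' x)
      (f'' (x + t) - f'' x) t := by
    intro t
    have h1 : HasDerivAt (fun v : ℝ => f' (x + v)) (f'' (x + t)) t := by
      simpa [Function.comp_def] using (hf'' (x + t)).comp t ((hasDerivAt_id t).const_add x)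
    have h2 : HasDerivAt (fun v : ℝ => v * f'' x) (f'' x) t := by
      simpa using (hasDerivAt_id t).mul_const (f'' x)
    exact (h1.sub_const (f' x)).sub h2
  have step1 : ∀ t : ℝ, |t| ≤ r → |f' (x + t) - f' x - t * f'' x| ≤ C * |t| := by
    intro t ht
    have key := Convex.norm_image_sub_le_of_norm_hasDerivWithin_le
      (f := fun v => f' (x + v) - f' x - v * f'' x) (f' := fun v => f'' (x + v) - f'' x)
      (s := Set.uIcc (0:ℝ) t)
      (fun v _ => (hφ'' v).hasDerivWithinAt)
      (fun v hv => by
        simpa [Real.norm_eq_abs] using hC v (le_trans (abs_le_of_mem_uIcc hv) ht))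
      (convex_uIcc 0 t) Set.left_mem_uIcc Set.right_mem_uIcc
    simpa [Real.norm_eq_abs] using key
  have key := Convex.norm_image_sub_le_of_norm_hasDerivWithin_le
    (f := fun v => f (x + v) - f x - v * f' x - v ^ 2 / 2 * f'' x)
    (f' := fun v => f' (x + v) - f' x - v * f'' x)
    (s := Set.uIcc (0:ℝ) u)
    (fun v _ => (hφ' v).hasDerivWithinAt)
    (fun v hv => by
      have h1 := step1 v (le_trans (abs_le_of_mem_uIcc hv) hu)
      have h2 : C * |v| ≤ C * |u| := by
        have hC0 : 0 ≤ C := le_trans (abs_nonneg _) (hC 0 (by simpa using le_trans (abs_nonneg u) hu))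
        exact mul_le_mul_of_nonneg_left (abs_le_of_mem_uIcc hv) hC0
      simpa [Real.norm_eq_abs] using le_trans h1 h2)
    (convex_uIcc 0 u) Set.left_mem_uIcc Set.right_mem_uIcc
  have : |f (x + u) - f x - u * f' x - u ^ 2 / 2 * f'' x| ≤ C * |u| * |u| := by
    simpa [Real.norm_eq_abs] using key
  calc |f (x + u) - f x - u * f' x - u ^ 2 / 2 * f'' x| ≤ C * |u| * |u| := this
    _ = C * u ^ 2 := by rw [mul_assoc, abs_mul_abs_self]; ring

open ZeroAtInfty

/-- The measurement operator of Example 2: for a density `p`,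
`(V t f) x = ∫ f (x - √t·y) p y dy` for `t ≠ 0`, and `V 0 f = f`. -/
noncomputable def convOp (p : ℝ → ℝ) (t : ℝ) (f : ℝ → ℝ) : ℝ → ℝ :=
  fun x => if t = 0 then f x else ∫ y : ℝ, f (x - Real.sqrt t * y) * p y

set_option maxHeartbeats 2000000 in
/-- Let `ξ` be a real random variable with mean `0`, variance `1`, whose law has
density `p ∈ C₀(ℝ)`.  Then for every `f ∈ C₀(ℝ)` which is twice differentiable with
`f', f'' ∈ C₀(ℝ)`, the limit `lim_{h→0⁺} (V_ξ(h) f - f)/h` exists in the supremum norm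
(i.e. uniformly on `ℝ`) and equals `(1/2) f''`. -/
theorem convOp_generator_eq_half_secondDeriv
    (p : C₀(ℝ, ℝ)) (hp0 : ∀ y, 0 ≤ p y) (hpInt : Integrable ⇑p)
    (hp1 : ∫ y : ℝ, p y = 1)
    (hm1Int : Integrable (fun y : ℝ => y * p y)) (hm1 : ∫ y : ℝ, y * p y = 0)
    (hm2Int : Integrable (fun y : ℝ => y ^ 2 * p y)) (hm2 : ∫ y : ℝ, y ^ 2 * p y = 1)
    (f f' f'' : C₀(ℝ, ℝ))
    (hf' : ∀ x, HasDerivAt ⇑f (f' x) x) (hf'' : ∀ x, HasDerivAt ⇑f' (f'' x) x) :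
    TendstoUniformly (fun (h : ℝ) (x : ℝ) => h⁻¹ * (convOp ⇑p h ⇑f x - f x))
      (fun x => (1 / 2) * f'' x) (𝓝[>] 0) := by
  rw [Metric.tendstoUniformly_iff]
  intro ε hε
  set K := ‖f''.toBCF‖ with hK
  have hK0 : 0 ≤ K := norm_nonneg _
  set M : ℝ := 2 * K + 1 with hMdef
  have hM0 : 0 < M := by positivity
  have hM : ∀ a b : ℝ, |f'' a - f'' b| ≤ M := by
    intro a b
    have ha := BoundedContinuousFunction.norm_coe_le_norm f''.toBCF a
    have hb := BoundedContinuousFunction.norm_coe_le_norm f''.toBCF b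
    simp only [ZeroAtInftyContinuousMap.toBCF_apply, Real.norm_eq_abs] at ha hb
    calc |f'' a - f'' b| ≤ |f'' a| + |f'' b| := abs_sub _ _
      _ ≤ M := by rw [hMdef]; linarith
  set ε₁ : ℝ := ε / 4 with hε₁def
  have hε₁0 : 0 < ε₁ := by positivity
  set ε₂ : ℝ := ε / (4 * M) with hε₂def
  have hε₂0 : 0 < ε₂ := by positivity
  -- uniform continuity of f''
  obtain ⟨δ, hδ0, hδ⟩ := Metric.uniformContinuous_iff.1
    (ZeroAtInftyContinuousMap.uniformContinuous f'') ε₁ hε₁0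
  -- tail estimate
  have htail : Tendsto (fun n : ℕ => ∫ y in Set.Icc (-(n:ℝ)) n, y ^ 2 * p y) atTop (𝓝 1) := by
    have hunion : (⋃ n : ℕ, Set.Icc (-(n:ℝ)) n) = Set.univ := by
      apply Set.eq_univ_iff_forall.2
      intro y
      obtain ⟨n, hn⟩ := exists_nat_ge |y|
      refine Set.mem_iUnion.2 ⟨n, ⟨?_, le_trans (le_abs_self y) hn⟩⟩
      have := neg_abs_le y
      linarith
    have := tendsto_setIntegral_of_monotone (μ := volume)
      (s := fun n : ℕ => Set.Icc (-(n:ℝ)) n) (f := fun y => y ^ 2 * p y)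
      (fun _ => measurableSet_Icc)
      (fun a b hab => Set.Icc_subset_Icc (neg_le_neg (by exact_mod_cast hab)) (by exact_mod_cast hab))
      (by rw [hunion]; exact hm2Int.integrableOn)
    rwa [hunion, setIntegral_univ, hm2] at this
  obtain ⟨n, hn1, hn2⟩ := ((htail.eventually (eventually_gt_nhds (show 1 - ε₂ < 1 by linarith))).and
    (eventually_ge_atTop 1)).exists
  set s : Set ℝ := Set.Icc (-(n:ℝ)) n with hsdef
  have hs : MeasurableSet s := measurableSet_Icc
  set T : ℝ := ∫ y in sᶜ, y ^ 2 * p y with hTdef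
  have hsplit : (∫ y in s, y ^ 2 * p y) + T = 1 := by
    rw [hTdef, integral_add_compl hs hm2Int, hm2]
  have hT2 : T < ε₂ := by linarith
  have hT0 : 0 ≤ T := setIntegral_nonneg hs.compl (fun y _ => mul_nonneg (sq_nonneg y) (hp0 y))
  set R : ℝ := (n : ℝ) with hRdef
  have hR0 : (0:ℝ) < R := by rw [hRdef]; exact_mod_cast Nat.lt_of_lt_of_le Nat.zero_lt_one hn2
  filter_upwards [Ioo_mem_nhdsGT_of_mem (Set.mem_Ico.2 ⟨le_refl (0:ℝ), pow_pos (div_pos hδ0 hR0) 2⟩)] with h hh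
  intro x
  obtain ⟨hh0, hh1⟩ := hh
  have hne : h ≠ 0 := ne_of_gt hh0
  simp only [convOp, if_neg hne]
  set c : ℝ := Real.sqrt h with hcdef
  have hc0 : 0 < c := Real.sqrt_pos.2 hh0
  have hc2 : c ^ 2 = h := Real.sq_sqrt hh0.le
  have hcR : c * R < δ := by
    have : c < δ / R := by
      have := Real.sqrt_lt_sqrt hh0.le hh1
      rwa [Real.sqrt_sq (by positivity)] at this
    calc c * R < (δ / R) * R := by exact mul_lt_mul_of_pos_right this hR0
      _ = δ := by field_simp
  -- integrability of the main term
  have hI1 : Integrable (fun y : ℝ => f (x - c * y) * p y) := by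
    refine hpInt.bdd_mul (c := ‖f.toBCF‖) ?_ (Filter.Eventually.of_forall fun y => ?_)
    · exact (f.continuous.comp (by continuity)).aestronglyMeasurable
    · exact BoundedContinuousFunction.norm_coe_le_norm f.toBCF _
  set G : ℝ → ℝ := fun y => (f (x - c * y) - f x + (c * y) * f' x - (c ^ 2 * y ^ 2) / 2 * f'' x) * p y with hGdef
  -- key identity
  have hIa : Integrable (fun y : ℝ => f (x - c * y) * p y - f x * p y) :=
    hI1.sub (hpInt.const_mul (f x))
  have hIb : Integrable (fun y : ℝ =>
      (f (x - c * y) * p y - f x * p y) + (c * f' x) * (y * p y)) :=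
    hIa.add (hm1Int.const_mul _)
  have hIc : Integrable (fun y : ℝ => (c ^ 2 / 2 * f'' x) * (y ^ 2 * p y)) :=
    hm2Int.const_mul _
  have hGsplit : ∀ y : ℝ, G y = ((f (x - c * y) * p y - f x * p y) + (c * f' x) * (y * p y))
      - (c ^ 2 / 2 * f'' x) * (y ^ 2 * p y) := by
    intro y; simp only [hGdef]; ring
  have hkey : ∫ y, G y = (∫ y : ℝ, f (x - c * y) * p y) - f x - h / 2 * f'' x := by
    calc ∫ y, G y = ∫ y, (((f (x - c * y) * p y - f x * p y) + (c * f' x) * (y * p y))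
        - (c ^ 2 / 2 * f'' x) * (y ^ 2 * p y)) := by
          exact integral_congr_ae (Filter.Eventually.of_forall hGsplit)
      _ = (((∫ y : ℝ, f (x - c * y) * p y) - ∫ y : ℝ, f x * p y)
            + ∫ y : ℝ, (c * f' x) * (y * p y)) - ∫ y : ℝ, (c ^ 2 / 2 * f'' x) * (y ^ 2 * p y) := by
          rw [integral_sub hIb hIc, integral_add hIa (hm1Int.const_mul _),
            integral_sub hI1 (hpInt.const_mul _)]
      _ = (∫ y : ℝ, f (x - c * y) * p y) - f x - h / 2 * f'' x := by
          rw [integral_const_mul, integral_const_mul, integral_const_mul, hp1, hm1, hm2, hc2]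
          ring
  -- pointwise bound
  have hGbound : ∀ y, ‖G y‖ ≤ (ε₁ * (y ^ 2 * p y) + M * (sᶜ.indicator (fun z => z ^ 2 * p z) y)) * h := by
    intro y
    have habs : ‖G y‖ = |f (x + -(c * y)) - f x - -(c * y) * f' x - (-(c * y)) ^ 2 / 2 * f'' x| * p y := by
      have harg : x + -(c * y) = x - c * y := by ring
      rw [harg]
      simp only [hGdef, Real.norm_eq_abs, abs_mul, abs_of_nonneg (hp0 y)]
      congr 1
      ring
    by_cases hy : y ∈ s
    · have hyR : |y| ≤ R := abs_le.2 ⟨hy.1, hy.2⟩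
      have hu : |(-(c * y))| ≤ c * R := by
        rw [abs_neg, abs_mul, abs_of_pos hc0]
        exact mul_le_mul_of_nonneg_left hyR hc0.le
      have htay := taylor_aux hf' hf'' x (C := ε₁) (r := c * R)
        (fun v hv => by
          have : dist (x + v) x < δ := by
            rw [Real.dist_eq]; simpa using lt_of_le_of_lt hv hcR
          exact le_of_lt (hδ this)) hu
      have hind : sᶜ.indicator (fun z => z ^ 2 * p z) y = 0 :=
        Set.indicator_of_notMem (by simpa using hy) _
      have h1 : |f (x + -(c * y)) - f x - -(c * y) * f' x - (-(c * y)) ^ 2 / 2 * f'' x| * p y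
          ≤ (ε₁ * (-(c * y)) ^ 2) * p y := mul_le_mul_of_nonneg_right htay (hp0 y)
      calc ‖G y‖ = _ := habs
        _ ≤ (ε₁ * (-(c * y)) ^ 2) * p y := h1
        _ = (ε₁ * (y ^ 2 * p y) + M * (sᶜ.indicator (fun z => z ^ 2 * p z) y)) * h := by
            rw [hind, ← hc2]; ring
    · have hu : |(-(c * y))| ≤ |c * y| := by rw [abs_neg]
      have htay := taylor_aux hf' hf'' x (C := M) (r := |c * y|)
        (fun v _ => hM _ _) hu
      have hind : sᶜ.indicator (fun z => z ^ 2 * p z) y = y ^ 2 * p y :=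
        Set.indicator_of_mem (by simpa using hy) _
      have h1 : |f (x + -(c * y)) - f x - -(c * y) * f' x - (-(c * y)) ^ 2 / 2 * f'' x| * p y
          ≤ (M * (-(c * y)) ^ 2) * p y := mul_le_mul_of_nonneg_right htay (hp0 y)
      have h2 : 0 ≤ ε₁ * (y ^ 2 * p y) * h :=
        mul_nonneg (mul_nonneg hε₁0.le (mul_nonneg (sq_nonneg y) (hp0 y))) hh0.le
      calc ‖G y‖ = _ := habs
        _ ≤ (M * (-(c * y)) ^ 2) * p y := h1
        _ = M * (y ^ 2 * p y) * h := by rw [← hc2]; ring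
        _ ≤ (ε₁ * (y ^ 2 * p y) + M * (y ^ 2 * p y)) * h := by nlinarith
        _ = (ε₁ * (y ^ 2 * p y) + M * (sᶜ.indicator (fun z => z ^ 2 * p z) y)) * h := by
            rw [hind]
  have hBint : Integrable (fun y : ℝ =>
      (ε₁ * (y ^ 2 * p y) + M * (sᶜ.indicator (fun z => z ^ 2 * p z) y)) * h) :=
    ((hm2Int.const_mul ε₁).add ((hm2Int.indicator hs.compl).const_mul M)).mul_const h
  have hBval : ∫ y : ℝ, (ε₁ * (y ^ 2 * p y) + M * (sᶜ.indicator (fun z => z ^ 2 * p z) y)) * h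
      = (ε₁ + M * T) * h := by
    rw [integral_mul_const, integral_add (hm2Int.const_mul ε₁)
      ((hm2Int.indicator hs.compl).const_mul M),
      integral_const_mul, integral_const_mul, integral_indicator hs.compl, hm2, ← hTdef]
    ring
  have hnormint : |∫ y, G y| ≤ (ε₁ + M * T) * h := by
    rw [← hBval, ← Real.norm_eq_abs]
    exact norm_integral_le_of_norm_le hBint (Filter.Eventually.of_forall hGbound)
  -- conclude
  rw [Real.dist_eq]
  have e1 : 1 / 2 * f'' x - h⁻¹ * ((∫ y : ℝ, f (x - c * y) * p y) - f x) = -(h⁻¹ * ∫ y, G y) := by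
    rw [hkey]
    field_simp
    ring
  rw [e1, abs_neg, abs_mul, abs_of_pos (inv_pos.2 hh0)]
  calc h⁻¹ * |∫ y, G y| ≤ h⁻¹ * ((ε₁ + M * T) * h) :=
        mul_le_mul_of_nonneg_left hnormint (inv_pos.2 hh0).le
    _ = ε₁ + M * T := by field_simp
    _ < ε₁ + M * ε₂ := by nlinarith
    _ = ε / 2 := by rw [hε₁def, hε₂def]; field_simp; ring
    _ < ε := by linarith
end
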